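/- Let Q₀ ⊂ ℙ⁸ be the rank-4 quadric defined by x₁₁x₂₂ − x₁₂x₂₁ = 0 in the projectivization of 3×3 matrices (x_{ij}). Every 3-dimensional linear subspace ℙ³ contained in Q₀ meets the Segre variety of rank-1 matrices. -/

import Mathlib

open Module

lemma cubic_root (a b c d : ℂ) :
    ∃ s t : ℂ, (s ≠ 0 ∨ t ≠ 0) ∧ a*s^3 + b*s^2*t + c*s*t^2 + d*t^3 = 0 := by
  by_cases ha : a = 0
  · exact ⟨1, 0, Or.inl one_ne_zero, by simp [ha]⟩
  · obtain ⟨r, hr⟩ := Complex.isAlgClosed.exists_root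
      (Polynomial.C a * Polynomial.X ^ 3 + Polynomial.C b * Polynomial.X ^ 2 +
        Polynomial.C c * Polynomial.X + Polynomial.C d)
      (by rw [Polynomial.degree_cubic ha]; norm_num)
    refine ⟨r, 1, Or.inr one_ne_zero, ?_⟩
    have h := hr
    simp [Polynomial.IsRoot] at h
    linear_combination h

lemma det_root (A B : Fin 3 → Fin 3 → ℂ) :
    ∃ s t : ℂ, (s ≠ 0 ∨ t ≠ 0) ∧
      (Matrix.of fun i j => s * A j i + t * B j i).det = 0 := by
  set F : ℂ → ℂ → ℂ := fun s t => (Matrix.of fun i j => s * A j i + t * B j i).det with hF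
  obtain ⟨s, t, hst, h⟩ := cubic_root (F 1 0) ((F 1 1 - F 1 (-1))/2 - F 0 1)
    ((F 1 1 + F 1 (-1))/2 - F 1 0) (F 0 1)
  refine ⟨s, t, hst, ?_⟩
  show F s t = 0
  have key : F s t = (F 1 0)*s^3 + ((F 1 1 - F 1 (-1))/2 - F 0 1)*s^2*t
      + ((F 1 1 + F 1 (-1))/2 - F 1 0)*s*t^2 + (F 0 1)*t^3 := by
    simp only [hF, Matrix.det_fin_three, Matrix.of_apply]
    ring
  rw [key]; exact h

lemma rank_le_one' (M : Matrix (Fin 3) (Fin 3) ℂ) (w : Fin 3 → ℂ)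
    (h : ∀ c : Fin 3 → ℂ, ∃ k : ℂ, M.mulVec c = k • M.mulVec w) : M.rank ≤ 1 := by
  have hr : LinearMap.range M.mulVecLin ≤ Submodule.span ℂ {M.mulVec w} := by
    rintro u ⟨c, rfl⟩
    obtain ⟨k, hk⟩ := h c
    rw [Matrix.mulVecLin_apply, hk]
    exact Submodule.smul_mem _ k (Submodule.mem_span_singleton_self _)
  have : M.rank = finrank ℂ (LinearMap.range M.mulVecLin) := rfl
  rw [this]
  refine le_trans (Submodule.finrank_mono hr) ?_
  by_cases hw : M.mulVec w = 0
  · rw [hw, Submodule.span_zero_singleton]; simp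
  · rw [finrank_span_singleton hw]

lemma exists_yz (x : Fin 3 → ℂ) (hx : x ≠ 0) :
    ∃ y z : Fin 3 → ℂ, ∀ c : Fin 3 → ℂ, ∃ α β γ : ℂ, c = α • x + β • y + γ • z := by
  have h3 : x 0 ≠ 0 ∨ x 1 ≠ 0 ∨ x 2 ≠ 0 := by
    by_contra hcon
    push_neg at hcon
    exact hx (by funext i; fin_cases i <;> simp [hcon.1, hcon.2.1, hcon.2.2])
  rcases h3 with h|h|h
  · refine ⟨![0,1,0], ![0,0,1], fun c => ⟨c 0 / x 0, c 1 - (c 0 / x 0) * x 1,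
      c 2 - (c 0 / x 0) * x 2, ?_⟩⟩
    funext i; fin_cases i <;> simp [Matrix.vecHead, Matrix.vecTail] <;> field_simp <;> ring
  · refine ⟨![1,0,0], ![0,0,1], fun c => ⟨c 1 / x 1, c 0 - (c 1 / x 1) * x 0,
      c 2 - (c 1 / x 1) * x 2, ?_⟩⟩
    funext i; fin_cases i <;> simp [Matrix.vecHead, Matrix.vecTail] <;> field_simp <;> ring
  · refine ⟨![1,0,0], ![0,1,0], fun c => ⟨c 2 / x 2, c 0 - (c 2 / x 2) * x 0,
      c 1 - (c 2 / x 2) * x 1, ?_⟩⟩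
    funext i; fin_cases i <;> simp [Matrix.vecHead, Matrix.vecTail] <;> field_simp <;> ring

lemma core (M₀ M₁ M₂ : Matrix (Fin 3) (Fin 3) ℂ)
    (hind : ∀ α β γ : ℂ, α • M₀ + β • M₁ + γ • M₂ = 0 → α = 0 ∧ β = 0 ∧ γ = 0)
    (x : Fin 3 → ℂ) (hx : x ≠ 0)
    (h0 : M₀.mulVec x = 0) (h1 : M₁.mulVec x = 0) (h2 : M₂.mulVec x = 0) :
    ∃ α β γ : ℂ, (α • M₀ + β • M₁ + γ • M₂) ≠ 0 ∧ (α • M₀ + β • M₁ + γ • M₂).rank ≤ 1 := by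
  obtain ⟨y, z, hspan⟩ := exists_yz x hx
  obtain ⟨s, t, hst, hdet⟩ := det_root
    (fun j => (![M₀, M₁, M₂] j).mulVec y) (fun j => (![M₀, M₁, M₂] j).mulVec z)
  obtain ⟨c, hc0, hc⟩ := Matrix.exists_mulVec_eq_zero_iff.mpr hdet
  refine ⟨c 0, c 1, c 2, ?_, ?_⟩
  · intro hM
    obtain ⟨e0, e1, e2⟩ := hind _ _ _ hM
    exact hc0 (by funext i; fin_cases i <;> assumption)
  · set M : Matrix (Fin 3) (Fin 3) ℂ := c 0 • M₀ + c 1 • M₁ + c 2 • M₂ with hMdef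
    have hMx : M.mulVec x = 0 := by
      simp [hMdef, Matrix.add_mulVec, Matrix.smul_mulVec, h0, h1, h2]
    have hkey : s • M.mulVec y + t • M.mulVec z = 0 := by
      funext i
      have hci := congrFun hc i
      simp only [Matrix.mulVec, dotProduct, Fin.sum_univ_three, Matrix.of_apply,
        Matrix.cons_val_zero, Matrix.cons_val_one, Matrix.head_cons, Matrix.cons_val_two,
        Matrix.tail_cons, Pi.zero_apply] at hci
      have goal' : s * (M.mulVec y i) + t * (M.mulVec z i) = 0 := by
        simp only [hMdef, Matrix.mulVec, dotProduct, Fin.sum_univ_three,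
          Matrix.add_apply, Pi.smul_apply, smul_eq_mul, Matrix.smul_apply]
        linear_combination hci
      simpa using goal'
    rcases hst with hs | ht
    · apply rank_le_one' M z
      intro v
      obtain ⟨α, β, γ, rfl⟩ := hspan v
      have hMy : M.mulVec y = (-(t/s)) • M.mulVec z := by
        funext i
        have := congrFun hkey i
        simp only [Pi.add_apply, Pi.smul_apply, smul_eq_mul, Pi.zero_apply] at this ⊢
        field_simp
        linear_combination this
      refine ⟨β * (-(t/s)) + γ, ?_⟩
      funext i
      have := congrFun hMy i
      simp only [Matrix.mulVec_add, Matrix.mulVec_smul, hMx] at *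
      simp only [Pi.add_apply, Pi.smul_apply, smul_eq_mul, Pi.zero_apply] at *
      rw [this]; ring
    · apply rank_le_one' M y
      intro v
      obtain ⟨α, β, γ, rfl⟩ := hspan v
      have hMz : M.mulVec z = (-(s/t)) • M.mulVec y := by
        funext i
        have := congrFun hkey i
        simp only [Pi.add_apply, Pi.smul_apply, smul_eq_mul, Pi.zero_apply] at this ⊢
        field_simp
        linear_combination this
      refine ⟨γ * (-(s/t)) + β, ?_⟩
      funext i
      have := congrFun hMz i
      simp only [Matrix.mulVec_add, Matrix.mulVec_smul, hMx] at *
      simp only [Pi.add_apply, Pi.smul_apply, smul_eq_mul, Pi.zero_apply] at *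
      rw [this]; ring

set_option synthInstance.maxHeartbeats 1000000 in
set_option maxHeartbeats 1000000 in
lemma lemD (W : Submodule ℂ (Matrix (Fin 3) (Fin 3) ℂ))
    (hW : 4 ≤ finrank ℂ W) (x : Fin 3 → ℂ) (hx : x ≠ 0)
    (h : ∀ M ∈ W, M.mulVec x 0 = 0 ∧ M.mulVec x 1 = 0) :
    ∃ M ∈ W, M ≠ 0 ∧ M.rank ≤ 1 := by
  classical
  let g : W →ₗ[ℂ] ℂ :=
    { toFun := fun M => (M : Matrix (Fin 3) (Fin 3) ℂ).mulVec x 2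
      map_add' := by
        intro M N
        simp [Matrix.add_mulVec]
      map_smul' := by
        intro a M
        simp [Matrix.smul_mulVec] }
  have h3 : 3 ≤ finrank ℂ (LinearMap.ker g) := by
    have hsum := LinearMap.finrank_range_add_finrank_ker g
    have hr : finrank ℂ (LinearMap.range g) ≤ 1 := by
      simpa using Submodule.finrank_le (LinearMap.range g)
    omega
  obtain ⟨f, hf⟩ := exists_linearIndependent_of_le_finrank h3
  set N : Fin 3 → Matrix (Fin 3) (Fin 3) ℂ := fun i => ((f i : W) : Matrix (Fin 3) (Fin 3) ℂ)
    with hN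
  have hNW : ∀ i, N i ∈ W := fun i => (f i : W).2
  have hNx : ∀ i, (N i).mulVec x = 0 := by
    intro i
    funext j
    fin_cases j
    · exact (h _ (hNW i)).1
    · exact (h _ (hNW i)).2
    · exact (f i).2
  have hind : ∀ α β γ : ℂ, α • N 0 + β • N 1 + γ • N 2 = 0 → α = 0 ∧ β = 0 ∧ γ = 0 := by
    intro α β γ hcomb
    have hker : α • f 0 + β • f 1 + γ • f 2 = 0 := by
      apply Subtype.ext
      apply Subtype.ext
      simpa [hN] using hcomb
    have := (Fintype.linearIndependent_iff (v := f)).mp hf ![α, β, γ]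
      (by rw [Fin.sum_univ_three]; simpa using hker)
    exact ⟨this 0, this 1, this 2⟩
  obtain ⟨α, β, γ, hne, hrk⟩ := core (N 0) (N 1) (N 2) hind x hx (hNx 0) (hNx 1) (hNx 2)
  exact ⟨α • N 0 + β • N 1 + γ • N 2,
    W.add_mem (W.add_mem (W.smul_mem _ (hNW 0)) (W.smul_mem _ (hNW 1))) (W.smul_mem _ (hNW 2)),
    hne, hrk⟩

lemma prop_trans (a b c d e f : ℂ) (h1 : a*d - b*c = 0) (h2 : a*f - b*e = 0)
    (h : a ≠ 0 ∨ b ≠ 0) : c*f - d*e = 0 := by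
  rcases h with h | h
  · have key : a * (c*f - d*e) = 0 := by linear_combination c * h2 - e * h1
    rcases mul_eq_zero.mp key with h' | h'
    · exact absurd h' h
    · exact h'
  · have key : b * (c*f - d*e) = 0 := by linear_combination d * h2 - f * h1
    rcases mul_eq_zero.mp key with h' | h'
    · exact absurd h' h
    · exact h'

lemma decomp (a b c d : ℂ) (h : a*d - b*c = 0) (hne : ¬(a = 0 ∧ b = 0 ∧ c = 0 ∧ d = 0)) :
    ∃ u₁ u₂ w₁ w₂ : ℂ, (u₁ ≠ 0 ∨ u₂ ≠ 0) ∧ (w₁ ≠ 0 ∨ w₂ ≠ 0) ∧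
      a = u₁*w₁ ∧ b = u₁*w₂ ∧ c = u₂*w₁ ∧ d = u₂*w₂ := by
  by_cases ha : a = 0
  · by_cases hb : b = 0
    · have hcd : c ≠ 0 ∨ d ≠ 0 := by
        by_cases hc : c = 0
        · exact Or.inr fun hd => hne ⟨ha, hb, hc, hd⟩
        · exact Or.inl hc
      exact ⟨0, 1, c, d, Or.inr one_ne_zero, hcd,
        by rw [ha]; ring, by rw [hb]; ring, by ring, by ring⟩
    · refine ⟨b, d, a/b, 1, Or.inl hb, Or.inr one_ne_zero, by field_simp, by ring, ?_, by ring⟩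
      field_simp
      linear_combination -h
  · refine ⟨a, c, 1, b/a, Or.inl ha, Or.inl one_ne_zero, by ring, by field_simp, by ring, ?_⟩
    field_simp
    linear_combination h

lemma classify (W : Submodule ℂ (Matrix (Fin 3) (Fin 3) ℂ))
    (hQ : ∀ M ∈ W, M 0 0 * M 1 1 - M 0 1 * M 1 0 = 0) :
    (∃ p q : ℂ, (p ≠ 0 ∨ q ≠ 0) ∧
      ∀ M ∈ W, p * M 0 0 + q * M 0 1 = 0 ∧ p * M 1 0 + q * M 1 1 = 0) ∨
    (∃ p q : ℂ, (p ≠ 0 ∨ q ≠ 0) ∧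
      ∀ M ∈ W, p * M 0 0 + q * M 1 0 = 0 ∧ p * M 0 1 + q * M 1 1 = 0) := by
  have hβ : ∀ M ∈ W, ∀ N ∈ W,
      M 0 0 * N 1 1 + N 0 0 * M 1 1 - M 0 1 * N 1 0 - N 0 1 * M 1 0 = 0 := by
    intro M hM N hN
    have h1 := hQ M hM
    have h2 := hQ N hN
    have h3 := hQ (M + N) (W.add_mem hM hN)
    simp only [Matrix.add_apply] at h3
    linear_combination h3 - h1 - h2
  by_cases hz : ∃ M ∈ W, ¬(M 0 0 = 0 ∧ M 0 1 = 0 ∧ M 1 0 = 0 ∧ M 1 1 = 0)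
  · obtain ⟨A, hAW, hA4⟩ := hz
    obtain ⟨u₁, u₂, w₁, w₂, hu, hw, ha, hb, hc, hd⟩ :=
      decomp (A 0 0) (A 0 1) (A 1 0) (A 1 1) (hQ A hAW) hA4
    by_cases hrow : ∃ M ∈ W, ¬(w₂ * M 0 0 - w₁ * M 0 1 = 0 ∧ w₂ * M 1 0 - w₁ * M 1 1 = 0)
    · obtain ⟨B, hBW, hB⟩ := hrow
      have hB4 : ¬(B 0 0 = 0 ∧ B 0 1 = 0 ∧ B 1 0 = 0 ∧ B 1 1 = 0) := by
        rintro ⟨e1, e2, e3, e4⟩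
        exact hB ⟨by rw [e1, e2]; ring, by rw [e3, e4]; ring⟩
      obtain ⟨v₁, v₂, x₁, x₂, hv, hxx, hb0, hb1, hb2, hb3⟩ :=
        decomp (B 0 0) (B 0 1) (B 1 0) (B 1 1) (hQ B hBW) hB4
      have hwx : w₁*x₂ - w₂*x₁ ≠ 0 := by
        intro heq
        refine hB ⟨?_, ?_⟩
        · rw [hb0, hb1]; linear_combination (-v₁) * heq
        · rw [hb2, hb3]; linear_combination (-v₂) * heq
      have hAB := hβ A hAW B hBW
      rw [ha, hb, hc, hd, hb0, hb1, hb2, hb3] at hAB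
      have hprod : (u₁*v₂ - u₂*v₁) * (w₁*x₂ - w₂*x₁) = 0 := by linear_combination hAB
      have huv : u₁*v₂ - u₂*v₁ = 0 := by
        rcases mul_eq_zero.mp hprod with h' | h'
        · exact h'
        · exact absurd h' hwx
      right
      refine ⟨u₂, -u₁, ?_, ?_⟩
      · rcases hu with h' | h'
        · exact Or.inr (neg_ne_zero.mpr h')
        · exact Or.inl h'
      · intro C hCW
        by_cases hC4 : C 0 0 = 0 ∧ C 0 1 = 0 ∧ C 1 0 = 0 ∧ C 1 1 = 0
        · obtain ⟨e1, e2, e3, e4⟩ := hC4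
          constructor
          · rw [e1, e3]; ring
          · rw [e2, e4]; ring
        · obtain ⟨y₁, y₂, z₁, z₂, hy, hzz, hc0, hc1, hc2, hc3⟩ :=
            decomp (C 0 0) (C 0 1) (C 1 0) (C 1 1) (hQ C hCW) hC4
          have hCA := hβ C hCW A hAW
          rw [ha, hb, hc, hd, hc0, hc1, hc2, hc3] at hCA
          have hprodCA : (u₁*y₂ - u₂*y₁) * (w₁*z₂ - w₂*z₁) = 0 := by linear_combination hCA
          have hCB := hβ C hCW B hBW
          rw [hb0, hb1, hb2, hb3, hc0, hc1, hc2, hc3] at hCB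
          have hprodCB : (v₁*y₂ - v₂*y₁) * (x₁*z₂ - x₂*z₁) = 0 := by linear_combination hCB
          have huy : u₁*y₂ - u₂*y₁ = 0 := by
            by_contra hne'
            have hwz : w₁*z₂ - w₂*z₁ = 0 := by
              rcases mul_eq_zero.mp hprodCA with h' | h'
              · exact absurd h' hne'
              · exact h'
            rcases mul_eq_zero.mp hprodCB with h' | h'
            · exact hne' (prop_trans v₁ v₂ u₁ u₂ y₁ y₂
                (by linear_combination -huv) (by linear_combination h') hv)
            · exact hwx (prop_trans z₁ z₂ w₁ w₂ x₁ x₂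
                (by linear_combination -hwz) (by linear_combination -h') hzz)
          constructor
          · rw [hc0, hc2]; linear_combination (-z₁) * huy
          · rw [hc1, hc3]; linear_combination (-z₂) * huy
    · push_neg at hrow
      left
      refine ⟨w₂, -w₁, ?_, ?_⟩
      · rcases hw with h' | h'
        · exact Or.inr (neg_ne_zero.mpr h')
        · exact Or.inl h'
      · intro M hM
        obtain ⟨e1, e2⟩ := hrow M hM
        exact ⟨by linear_combination e1, by linear_combination e2⟩
  · push_neg at hz
    left
    refine ⟨1, 0, Or.inl one_ne_zero, fun M hM => ?_⟩
    obtain ⟨e1, e2, e3, e4⟩ := hz M hM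
    exact ⟨by rw [e1]; ring, by rw [e3]; ring⟩

/-- Let `Q₀ ⊂ ℙ⁸ = ℙ(Hom(ℂ³,ℂ³))` be the rank-4 quadric `x₁₁x₂₂ − x₁₂x₂₁ = 0`.  Every
3-dimensional linear subspace `ℙ³` contained in `Q₀` (i.e. every 4-dimensional linear
subspace of the affine cone) meets the Segre variety of rank-1 matrices. -/
theorem P3_in_rank_four_quadric_meets_segre
    (W : Submodule ℂ (Matrix (Fin 3) (Fin 3) ℂ))
    (hW : Module.finrank ℂ W = 4)
    (hQ : ∀ M ∈ W, M 0 0 * M 1 1 - M 0 1 * M 1 0 = 0) :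
    ∃ M ∈ W, M ≠ 0 ∧ M.rank ≤ 1 := by
  rcases classify W hQ with ⟨p, q, hpq, hrow⟩ | ⟨p, q, hpq, hcol⟩
  · refine lemD W (le_of_eq hW.symm) ![p, q, 0] ?_ ?_
    · intro h0
      rcases hpq with h' | h'
      · exact h' (by simpa using congrFun h0 0)
      · exact h' (by simpa using congrFun h0 1)
    · intro M hM
      obtain ⟨e1, e2⟩ := hrow M hM
      constructor
      · simp only [Matrix.mulVec, dotProduct, Fin.sum_univ_three,
          Matrix.cons_val_zero, Matrix.cons_val_one, Matrix.head_cons,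
          Matrix.cons_val_two, Matrix.tail_cons]
        linear_combination e1
      · simp only [Matrix.mulVec, dotProduct, Fin.sum_univ_three,
          Matrix.cons_val_zero, Matrix.cons_val_one, Matrix.head_cons,
          Matrix.cons_val_two, Matrix.tail_cons]
        linear_combination e2
  · set e := Matrix.transposeLinearEquiv (Fin 3) (Fin 3) ℂ ℂ with he
    have hmap : ∃ M ∈ W.map (e : Matrix (Fin 3) (Fin 3) ℂ →ₗ[ℂ] Matrix (Fin 3) (Fin 3) ℂ),
        M ≠ 0 ∧ M.rank ≤ 1 := by
      refine lemD _ ?_ ![p, q, 0] ?_ ?_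
      · rw [LinearEquiv.finrank_map_eq, hW]
      · intro h0
        rcases hpq with h' | h'
        · exact h' (by simpa using congrFun h0 0)
        · exact h' (by simpa using congrFun h0 1)
      · rintro M' ⟨N, hN, rfl⟩
        obtain ⟨e1, e2⟩ := hcol N hN
        have heN : (e : Matrix (Fin 3) (Fin 3) ℂ →ₗ[ℂ] _) N = N.transpose := rfl
        rw [heN]
        constructor
        · simp only [Matrix.mulVec, dotProduct, Fin.sum_univ_three,
            Matrix.transpose_apply, Matrix.cons_val_zero, Matrix.cons_val_one,
            Matrix.head_cons, Matrix.cons_val_two, Matrix.tail_cons]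
          linear_combination e1
        · simp only [Matrix.mulVec, dotProduct, Fin.sum_univ_three,
            Matrix.transpose_apply, Matrix.cons_val_zero, Matrix.cons_val_one,
            Matrix.head_cons, Matrix.cons_val_two, Matrix.tail_cons]
          linear_combination e2
    obtain ⟨M', hM', hM'0, hM'rk⟩ := hmap
    obtain ⟨N, hNW, rfl⟩ := hM'
    refine ⟨N, hNW, ?_, ?_⟩
    · intro h0
      apply hM'0
      rw [h0]
      simp
    · have heN : (e : Matrix (Fin 3) (Fin 3) ℂ →ₗ[ℂ] _) N = N.transpose := rfl
      rw [heN] at hM'rk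
      rwa [Matrix.rank_transpose] at hM'rk
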